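/- For any prime p and positive integer n, the group Γ₀(pⁿ) decomposes as the disjoint union over residues l mod pⁿ with gcd(l,p)=1 and residues j mod pⁿ of the cosets S T^l S T^{l⁻¹} S T^j Γ(pⁿ), where S = [[0,-1],[1,0]], T = [[1,1],[0,1]], l⁻¹ is an inverse of l modulo pⁿ, Γ₀(pⁿ) is the subgroup of SL₂(ℤ) of matrices with lower-left entry divisible by pⁿ, and Γ(pⁿ) is the principal congruence subgroup of level pⁿ. -/

import Mathlib

open Matrix MatrixGroups CongruenceSubgroup ModularGroup

private lemma stmt2_coeM (a b c : ℕ) :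
    (↑(ModularGroup.S * ModularGroup.T ^ a * ModularGroup.S * ModularGroup.T ^ b *
      ModularGroup.S * ModularGroup.T ^ c) : Matrix (Fin 2) (Fin 2) ℤ) =
    !![-(b:ℤ), 1 - b*c; a*b - 1, (a*b-1)*c - a] := by
  have hT : ∀ m : ℕ, (ModularGroup.T ^ m) = ModularGroup.T ^ (m:ℤ) :=
    fun m => (zpow_natCast _ m).symm
  rw [hT, hT, hT]
  simp only [Matrix.SpecialLinearGroup.coe_mul, ModularGroup.coe_S, ModularGroup.coe_T_zpow]
  ext i j
  fin_cases i <;> fin_cases j <;>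
    simp [Matrix.mul_apply, Fin.sum_univ_succ] <;> ring

private lemma stmt2_M00 (a b c : ℕ) :
    ((ModularGroup.S * ModularGroup.T ^ a * ModularGroup.S * ModularGroup.T ^ b *
      ModularGroup.S * ModularGroup.T ^ c) 0 0 : ℤ) = -(b:ℤ) := by rw [stmt2_coeM]; rfl
private lemma stmt2_M01 (a b c : ℕ) :
    ((ModularGroup.S * ModularGroup.T ^ a * ModularGroup.S * ModularGroup.T ^ b *
      ModularGroup.S * ModularGroup.T ^ c) 0 1 : ℤ) = 1 - (b:ℤ)*c := by rw [stmt2_coeM]; rfl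
private lemma stmt2_M10 (a b c : ℕ) :
    ((ModularGroup.S * ModularGroup.T ^ a * ModularGroup.S * ModularGroup.T ^ b *
      ModularGroup.S * ModularGroup.T ^ c) 1 0 : ℤ) = (a:ℤ)*b - 1 := by rw [stmt2_coeM]; rfl
private lemma stmt2_M11 (a b c : ℕ) :
    ((ModularGroup.S * ModularGroup.T ^ a * ModularGroup.S * ModularGroup.T ^ b *
      ModularGroup.S * ModularGroup.T ^ c) 1 1 : ℤ) = ((a:ℤ)*b-1)*c - a := by
  rw [stmt2_coeM]; rfl

private lemma stmt2_key (N : ℕ) (M A : SL(2,ℤ)) : M⁻¹ * A ∈ Gamma N ↔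
    ∀ i j, ((M i j : ℤ) : ZMod N) = ((A i j : ℤ) : ZMod N) := by
  rw [Gamma_mem', _root_.map_mul, _root_.map_inv, inv_mul_eq_one]
  constructor
  · intro h i j
    rw [← SL_reduction_mod_hom_val N M, ← SL_reduction_mod_hom_val N A, h]
  · intro h
    ext i j
    simpa using h i j

theorem stmt2 (p : ℕ) [hp : Fact p.Prime] (n : ℕ) (hn : 0 < n) :
    ∀ A ∈ Gamma0 (p ^ n), ∃! lj : (ZMod (p ^ n))ˣ × ZMod (p ^ n),
      (ModularGroup.S * ModularGroup.T ^ ((lj.1 : ZMod (p ^ n)).val) * ModularGroup.S *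
          ModularGroup.T ^ (((lj.1⁻¹ : (ZMod (p ^ n))ˣ) : ZMod (p ^ n)).val) *
          ModularGroup.S * ModularGroup.T ^ lj.2.val)⁻¹ * A ∈ Gamma (p ^ n) := by
  intro A hA
  set N := p ^ n with hN
  haveI : NeZero N := ⟨(pow_pos hp.out.pos n).ne'⟩
  have hval : ∀ x : ZMod N, ((x.val : ℕ) : ZMod N) = x := ZMod.natCast_rightInverse
  set a00 : ZMod N := ((A 0 0 : ℤ) : ZMod N) with ha00
  set a01 : ZMod N := ((A 0 1 : ℤ) : ZMod N) with ha01
  set a10 : ZMod N := ((A 1 0 : ℤ) : ZMod N) with ha10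
  set a11 : ZMod N := ((A 1 1 : ℤ) : ZMod N) with ha11
  have h10 : a10 = 0 := by rw [ha10]; exact Gamma0_mem.mp hA
  have hdet : a00 * a11 = 1 := by
    have h2 : A 0 0 * A 1 1 - A 0 1 * A 1 0 = 1 := by
      rw [← Matrix.det_fin_two]; exact A.det_coe
    have h3 := congrArg (fun z : ℤ => (z : ZMod N)) h2
    push_cast at h3
    rw [← ha00, ← ha01, ← ha10, ← ha11, h10] at h3
    linear_combination h3
  have cond : ∀ (l : (ZMod N)ˣ) (j : ZMod N),
      ((ModularGroup.S * ModularGroup.T ^ ((l : ZMod N).val) * ModularGroup.S *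
          ModularGroup.T ^ (((l⁻¹ : (ZMod N)ˣ) : ZMod N).val) *
          ModularGroup.S * ModularGroup.T ^ j.val)⁻¹ * A ∈ Gamma N) ↔
      (-((l⁻¹ : (ZMod N)ˣ) : ZMod N) = a00 ∧ 1 - ((l⁻¹ : (ZMod N)ˣ) : ZMod N) * j = a01 ∧
        -(l : ZMod N) = a11) := by
    intro l j
    rw [stmt2_key]
    have huv : (l : ZMod N) * ((l⁻¹ : (ZMod N)ˣ) : ZMod N) = 1 := l.mul_inv
    constructor
    · intro h
      have h1 := h 0 0
      have h2 := h 0 1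
      have h4 := h 1 1
      rw [stmt2_M00] at h1
      rw [stmt2_M01] at h2
      rw [stmt2_M11] at h4
      push_cast at h1 h2 h4
      simp only [hval] at h1 h2 h4
      exact ⟨h1, h2, by linear_combination h4 - j * huv⟩
    · rintro ⟨h1, h2, h4⟩ i j'
      have e00 : ((((ModularGroup.S * ModularGroup.T ^ ((l : ZMod N).val) * ModularGroup.S *
          ModularGroup.T ^ (((l⁻¹ : (ZMod N)ˣ) : ZMod N).val) * ModularGroup.S *
          ModularGroup.T ^ j.val) (0 : Fin 2) (0 : Fin 2) : ℤ)) : ZMod N) =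
          ((A (0 : Fin 2) (0 : Fin 2) : ℤ) : ZMod N) := by
        rw [stmt2_M00]; push_cast; simp only [hval]; exact h1
      have e01 : ((((ModularGroup.S * ModularGroup.T ^ ((l : ZMod N).val) * ModularGroup.S *
          ModularGroup.T ^ (((l⁻¹ : (ZMod N)ˣ) : ZMod N).val) * ModularGroup.S *
          ModularGroup.T ^ j.val) (0 : Fin 2) (1 : Fin 2) : ℤ)) : ZMod N) =
          ((A (0 : Fin 2) (1 : Fin 2) : ℤ) : ZMod N) := by
        rw [stmt2_M01]; push_cast; simp only [hval]; exact h2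
      have e10 : ((((ModularGroup.S * ModularGroup.T ^ ((l : ZMod N).val) * ModularGroup.S *
          ModularGroup.T ^ (((l⁻¹ : (ZMod N)ˣ) : ZMod N).val) * ModularGroup.S *
          ModularGroup.T ^ j.val) (1 : Fin 2) (0 : Fin 2) : ℤ)) : ZMod N) =
          ((A (1 : Fin 2) (0 : Fin 2) : ℤ) : ZMod N) := by
        rw [stmt2_M10]; push_cast; simp only [hval]; linear_combination huv - h10
      have e11 : ((((ModularGroup.S * ModularGroup.T ^ ((l : ZMod N).val) * ModularGroup.S *
          ModularGroup.T ^ (((l⁻¹ : (ZMod N)ˣ) : ZMod N).val) * ModularGroup.S *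
          ModularGroup.T ^ j.val) (1 : Fin 2) (1 : Fin 2) : ℤ)) : ZMod N) =
          ((A (1 : Fin 2) (1 : Fin 2) : ℤ) : ZMod N) := by
        rw [stmt2_M11]; push_cast; simp only [hval]; linear_combination j * huv + h4
      fin_cases i <;> fin_cases j'
      exacts [e00, e01, e10, e11]
  have hu : (-a11) * (-a00) = 1 := by linear_combination hdet
  have hu' : (-a00) * (-a11) = 1 := by linear_combination hdet
  refine ⟨⟨⟨-a11, -a00, hu, hu'⟩, (-a11) * (1 - a01)⟩, ?_, ?_⟩
  · refine (cond ⟨-a11, -a00, hu, hu'⟩ ((-a11) * (1 - a01))).mpr ⟨?_, ?_, ?_⟩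
    · show -(-a00) = a00; ring
    · show 1 - (-a00) * ((-a11) * (1 - a01)) = a01; linear_combination (a01 - 1) * hdet
    · show -(-a11) = a11; ring
  · rintro ⟨l, j⟩ h
    obtain ⟨h1, h2, h4⟩ := (cond l j).mp h
    have hl : l = ⟨-a11, -a00, hu, hu'⟩ := Units.ext (by simpa using neg_eq_iff_eq_neg.mp h4)
    rw [hl] at h2
    have hv : (((⟨-a11, -a00, hu, hu'⟩ : (ZMod N)ˣ)⁻¹ : (ZMod N)ˣ) : ZMod N) = -a00 := rfl
    rw [hv] at h2
    have hj : j = (-a11) * (1 - a01) := by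
      have h5 : (-a00) * j = 1 - a01 := by linear_combination -h2
      calc j = ((-a11) * (-a00)) * j := by rw [hu, one_mul]
      _ = (-a11) * (1 - a01) := by rw [mul_assoc, h5]
    rw [Prod.mk.injEq]
    exact ⟨hl, hj⟩
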